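/- Let A(t) be a solution of the matrix ODE A' = −½(tr(A)² + tr S(A)²)·A + ½[A,[A,Aᵗ]] − (tr A / 2)·[A,Aᵗ] on real m×m matrices. Then d/dt |A|² ≤ 0, with equality at time t if and only if Aᵗ = −A at that time; in particular |A(t)| is nonincreasing and the solution exists for all t ∈ [0,∞). -/

import Mathlib

open Matrix Set

/-- Symmetric part `S(B) = ½(B + Bᵗ)`. -/
noncomputable def symP {m : ℕ} (B : Matrix (Fin m) (Fin m) ℝ) :
    Matrix (Fin m) (Fin m) ℝ := (1/2 : ℝ) • (B + Bᵀ)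

/-- `[B, Bᵗ] = BBᵗ − BᵗB`. -/
def commT {m : ℕ} (B : Matrix (Fin m) (Fin m) ℝ) :
    Matrix (Fin m) (Fin m) ℝ := B * Bᵀ - Bᵀ * B

/-- Right-hand side of the bracket flow ODE
`A' = −½((tr A)² + tr S(A)²)A + ½[A,[A,Aᵗ]] − (tr A/2)[A,Aᵗ]`. -/
noncomputable def bfRHS {m : ℕ} (B : Matrix (Fin m) (Fin m) ℝ) :
    Matrix (Fin m) (Fin m) ℝ :=
  (-(1/2) * ((Matrix.trace B) ^ 2 + Matrix.trace (symP B * symP B))) • B +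
    (1/2 : ℝ) • (B * commT B - commT B * B) - (Matrix.trace B / 2) • commT B

/-- The derivative of `|A|²` along the flow. -/
noncomputable def bfNormDeriv {m : ℕ} (B : Matrix (Fin m) (Fin m) ℝ) : ℝ :=
  -(((Matrix.trace B) ^ 2 + Matrix.trace (symP B * symP B)) * Matrix.trace (B * Bᵀ)) -
    Matrix.trace (commT B * (commT B)ᵀ)

open scoped NNReal

variable {m : ℕ}

lemma commT_transpose (B : Matrix (Fin m) (Fin m) ℝ) : (commT B)ᵀ = commT B := by
  simp [commT, transpose_sub, transpose_mul]

lemma symP_transpose (B : Matrix (Fin m) (Fin m) ℝ) : (symP B)ᵀ = symP B := by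
  simp [symP, transpose_add, add_comm]

lemma trace_sum_sq (X Y : Matrix (Fin m) (Fin m) ℝ) :
    Matrix.trace (X * Yᵀ) = ∑ i, ∑ j, X i j * Y i j := by
  simp [Matrix.trace, Matrix.mul_apply, Matrix.diag, Matrix.transpose_apply]

lemma trace_mul_transpose_nonneg (X : Matrix (Fin m) (Fin m) ℝ) :
    0 ≤ Matrix.trace (X * Xᵀ) := by
  rw [trace_sum_sq]
  exact Finset.sum_nonneg fun i _ => Finset.sum_nonneg fun j _ => mul_self_nonneg _

lemma eq_zero_of_trace_mul_transpose (X : Matrix (Fin m) (Fin m) ℝ)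
    (h : Matrix.trace (X * Xᵀ) = 0) : X = 0 := by
  rw [trace_sum_sq] at h
  ext i j
  have h1 : ∀ i ∈ Finset.univ, (0:ℝ) ≤ ∑ j, X i j * X i j :=
    fun i _ => Finset.sum_nonneg fun j _ => mul_self_nonneg _
  have h2 := (Finset.sum_eq_zero_iff_of_nonneg h1).mp h i (Finset.mem_univ i)
  have h3 := (Finset.sum_eq_zero_iff_of_nonneg (fun j _ => mul_self_nonneg (X i j))).mp h2 j
    (Finset.mem_univ j)
  have := mul_self_eq_zero.mp h3
  simpa using this

lemma h0lem (B : Matrix (Fin m) (Fin m) ℝ) : Matrix.trace (commT B * Bᵀ) = 0 := by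
  unfold commT
  rw [Matrix.sub_mul, trace_sub, trace_mul_comm (B * Bᵀ) Bᵀ, Matrix.mul_assoc, sub_self]

lemma h1lem (B : Matrix (Fin m) (Fin m) ℝ) :
    Matrix.trace ((B * commT B - commT B * B) * Bᵀ) =
      -Matrix.trace (commT B * (commT B)ᵀ) := by
  rw [commT_transpose]
  have e1 : Matrix.trace ((B * commT B) * Bᵀ) = Matrix.trace ((Bᵀ * B) * commT B) := by
    rw [trace_mul_comm, ← Matrix.mul_assoc]
  have e2 : Matrix.trace ((commT B * B) * Bᵀ) = Matrix.trace ((B * Bᵀ) * commT B) := by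
    rw [Matrix.mul_assoc, trace_mul_comm]
  rw [Matrix.sub_mul, trace_sub, e1, e2, ← trace_sub, ← Matrix.sub_mul]
  have : Bᵀ * B - B * Bᵀ = -(commT B) := by unfold commT; abel
  rw [this, Matrix.neg_mul, trace_neg]

lemma keyAlg (B : Matrix (Fin m) (Fin m) ℝ) :
    bfNormDeriv B = 2 * Matrix.trace (bfRHS B * Bᵀ) := by
  unfold bfRHS bfNormDeriv
  rw [Matrix.sub_mul, Matrix.add_mul, Matrix.smul_mul, Matrix.smul_mul, Matrix.smul_mul,
    trace_sub, trace_add, trace_smul, trace_smul, trace_smul, h0lem, h1lem]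
  simp only [smul_eq_mul]
  ring

lemma bfNormDeriv_nonpos (B : Matrix (Fin m) (Fin m) ℝ) : bfNormDeriv B ≤ 0 := by
  have h1 := trace_mul_transpose_nonneg B
  have h2 := trace_mul_transpose_nonneg (symP B)
  rw [symP_transpose] at h2
  have h3 := trace_mul_transpose_nonneg (commT B)
  have h4 : (0:ℝ) ≤ (Matrix.trace B)^2 := sq_nonneg _
  unfold bfNormDeriv
  nlinarith [mul_nonneg (add_nonneg h4 h2) h1]

lemma bfNormDeriv_eq_zero_iff (B : Matrix (Fin m) (Fin m) ℝ) :
    bfNormDeriv B = 0 ↔ Bᵀ = -B := by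
  constructor
  · intro h
    have h1 := trace_mul_transpose_nonneg B
    have h2 := trace_mul_transpose_nonneg (symP B)
    rw [symP_transpose] at h2
    have h3 := trace_mul_transpose_nonneg (commT B)
    have h4 : (0:ℝ) ≤ (Matrix.trace B)^2 := sq_nonneg _
    unfold bfNormDeriv at h
    have hprod : ((Matrix.trace B)^2 + Matrix.trace (symP B * symP B)) *
        Matrix.trace (B * Bᵀ) = 0 := by
      nlinarith [mul_nonneg (add_nonneg h4 h2) h1]
    rcases mul_eq_zero.mp hprod with hc | hq
    · have hs : Matrix.trace (symP B * symP B) = 0 := by nlinarith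
      have : Matrix.trace (symP B * (symP B)ᵀ) = 0 := by rw [symP_transpose]; exact hs
      have hS := eq_zero_of_trace_mul_transpose _ this
      unfold symP at hS
      have hBB : B + Bᵀ = 0 := by
        have := smul_eq_zero.mp hS
        rcases this with h' | h'
        · norm_num at h'
        · exact h'
      linear_combination (norm := abel) hBB
    · have hB := eq_zero_of_trace_mul_transpose _ hq
      rw [hB]; simp
  · intro h
    have hS : symP B = 0 := by
      unfold symP; rw [h]; simp
    have hC : commT B = 0 := by
      unfold commT; rw [h]; simp [Matrix.mul_neg, Matrix.neg_mul]
    have hT : Matrix.trace B = 0 := by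
      have := Matrix.trace_transpose B
      rw [h, trace_neg] at this
      linarith
    unfold bfNormDeriv
    rw [hS, hC, hT]
    simp

lemma qHasDeriv {A : ℝ → Matrix (Fin m) (Fin m) ℝ} {s : Set ℝ} {t : ℝ}
    (h : ∀ i j, HasDerivWithinAt (fun u => A u i j) (bfRHS (A t) i j) s t) :
    HasDerivWithinAt (fun u => Matrix.trace (A u * (A u)ᵀ)) (bfNormDeriv (A t)) s t := by
  have hfun : (fun u => Matrix.trace (A u * (A u)ᵀ)) =
      fun u => ∑ i, ∑ j, A u i j * A u i j := funext fun u => trace_sum_sq _ _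
  have key : bfNormDeriv (A t) =
      ∑ i, ∑ j, (bfRHS (A t) i j * A t i j + A t i j * bfRHS (A t) i j) := by
    have e : ∀ i j : Fin m, bfRHS (A t) i j * A t i j + A t i j * bfRHS (A t) i j
        = 2 * (bfRHS (A t) i j * A t i j) := by intros; ring
    simp only [e, ← Finset.mul_sum]
    rw [keyAlg, trace_sum_sq]
  rw [hfun, key]
  exact HasDerivWithinAt.fun_sum fun i _ => HasDerivWithinAt.fun_sum fun j _ => (h i j).mul (h i j)

lemma qAntitone {A : ℝ → Matrix (Fin m) (Fin m) ℝ} {D : Set ℝ} (hD : Convex ℝ D)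
    (h : ∀ t ∈ D, ∀ i j : Fin m,
      HasDerivWithinAt (fun u => A u i j) (bfRHS (A t) i j) D t) :
    AntitoneOn (fun t => Matrix.trace (A t * (A t)ᵀ)) D := by
  have hder : ∀ t ∈ D, HasDerivWithinAt (fun u => Matrix.trace (A u * (A u)ᵀ))
      (bfNormDeriv (A t)) D t := fun t ht => qHasDeriv (h t ht)
  apply antitoneOn_of_deriv_nonpos hD
  · exact fun t ht => (hder t ht).continuousWithinAt
  · intro t ht
    exact ((hder t (interior_subset ht)).hasDerivAt
      (mem_interior_iff_mem_nhds.mp ht)).differentiableAt.differentiableWithinAt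
  · intro t ht
    rw [((hder t (interior_subset ht)).hasDerivAt
      (mem_interior_iff_mem_nhds.mp ht)).deriv]
    exact bfNormDeriv_nonpos _


section Construction

attribute [local instance] Matrix.linftyOpNormedRing Matrix.linftyOpNormedAlgebra

variable {m : ℕ}

local notation "M" => Matrix (Fin m) (Fin m) ℝ

noncomputable def entryCLM (i j : Fin m) : M →L[ℝ] ℝ :=
  LinearMap.toContinuousLinearMap (Matrix.entryLinearMap ℝ ℝ i j)

lemma entry_deriv {A : ℝ → M} {s : Set ℝ} {t : ℝ} {V : M}
    (h : HasDerivWithinAt A V s t) (i j : Fin m) :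
    HasDerivWithinAt (fun u => A u i j) (V i j) s t := by
  have := HasFDerivAt.comp_hasDerivWithinAt t ((entryCLM i j).hasFDerivAt) h
  exact this

lemma norm_le_of_entries (X : M) {c : ℝ} (hc : 0 ≤ c) (h : ∀ i j, |X i j| ≤ c) :
    ‖X‖ ≤ m * c := by
  set c' : ℝ≥0 := ⟨c, hc⟩
  have key : ‖X‖₊ ≤ (m : ℝ≥0) * c' := by
    rw [Matrix.linfty_opNNNorm_def]
    apply Finset.sup_le
    intro i _
    calc ∑ j, ‖X i j‖₊ ≤ ∑ _j : Fin m, c' := by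
          apply Finset.sum_le_sum
          intro j _
          rw [← NNReal.coe_le_coe]
          show (‖X i j‖₊ : ℝ) ≤ c
          simpa [Real.norm_eq_abs] using h i j
      _ = (m : ℝ≥0) * c' := by simp [Finset.sum_const, nsmul_eq_mul]
  calc ‖X‖ = ((‖X‖₊ : ℝ≥0) : ℝ) := (coe_nnnorm X).symm
    _ ≤ (((m : ℝ≥0) * c' : ℝ≥0) : ℝ) := by exact_mod_cast key
    _ = m * c := by push_cast; rfl

noncomputable def transposeCLM : M →L[ℝ] M :=
  LinearMap.toContinuousLinearMap
    { toFun := Matrix.transpose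
      map_add' := Matrix.transpose_add
      map_smul' := Matrix.transpose_smul }

lemma contDiff_tr : ContDiff ℝ 1 (fun B : M => Bᵀ) :=
  (transposeCLM (m := m)).contDiff

lemma contDiff_trace' : ContDiff ℝ 1 (fun B : M => Matrix.trace B) :=
  (LinearMap.toContinuousLinearMap (Matrix.traceLinearMap (Fin m) ℝ ℝ)).contDiff

lemma contDiff_bfRHS : ContDiff ℝ 1 (bfRHS : M → M) := by
  have htr := contDiff_tr (m := m)
  have hT := contDiff_trace' (m := m)
  have hC : ContDiff ℝ 1 (fun B : M => commT B) := by
    unfold commT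
    exact (contDiff_id.mul htr).sub (htr.mul contDiff_id)
  have hS : ContDiff ℝ 1 (fun B : M => symP B) := by
    unfold symP
    exact ContDiff.const_smul _ (contDiff_id.add htr)
  have hscal : ContDiff ℝ 1 (fun B : M =>
      -(1/2 : ℝ) * ((Matrix.trace B) ^ 2 + Matrix.trace (symP B * symP B))) :=
    contDiff_const.mul ((hT.pow 2).add (hT.comp (hS.mul hS)))
  unfold bfRHS
  exact ((hscal.smul contDiff_id).add
    (ContDiff.const_smul _ ((contDiff_id.mul hC).sub (hC.mul contDiff_id)))).sub
    ((hT.div_const 2).smul hC)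

lemma exists_lip (r : ℝ) :
    ∃ L : ℝ≥0, LipschitzOnWith L (bfRHS : M → M) (Metric.closedBall 0 r) := by
  have hcd := contDiff_bfRHS (m := m)
  have hcont := hcd.continuous_fderiv one_ne_zero
  obtain ⟨C, hC⟩ := (isCompact_closedBall (0:M) r).exists_bound_of_continuousOn
    hcont.continuousOn
  refine ⟨(⟨max C 0, le_max_right _ _⟩ : ℝ≥0), ?_⟩
  apply Convex.lipschitzOnWith_of_nnnorm_hasFDerivWithin_le
    (f' := fun x => fderiv ℝ (bfRHS : M → M) x)
  · intro x _
    exact ((hcd.differentiable one_ne_zero) x).hasFDerivAt.hasFDerivWithinAt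
  · intro x hx
    apply NNReal.coe_le_coe.mp
    simp only [coe_nnnorm, NNReal.coe_mk]
    exact le_trans (hC x hx) (le_max_left _ _)
  · exact convex_closedBall _ _

lemma exists_bound (r : ℝ) : ∃ C : ℝ, 1 ≤ C ∧
    ∀ x ∈ Metric.closedBall (0 : M) r, ‖bfRHS x‖ ≤ C := by
  have hcd := contDiff_bfRHS (m := m)
  obtain ⟨C, hC⟩ := (isCompact_closedBall (0:M) r).exists_bound_of_continuousOn
    (hcd.continuous.continuousOn)
  exact ⟨max C 1, le_max_right _ _, fun x hx => le_trans (hC x hx) (le_max_left _ _)⟩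

lemma pl_step {K C : ℝ} {L : ℝ≥0} (hK : 0 ≤ K) (hC1 : 1 ≤ C)
    (hL : LipschitzOnWith L (bfRHS : M → M) (Metric.closedBall 0 (K + 1)))
    (hC : ∀ x ∈ Metric.closedBall (0 : M) (K + 1), ‖bfRHS x‖ ≤ C)
    (x₀ : M) (hx₀ : ‖x₀‖ ≤ K) (t₀ : ℝ) :
    ∃ g : ℝ → M, g t₀ = x₀ ∧ ∀ t ∈ Icc t₀ (t₀ + 1/C),
      HasDerivWithinAt g (bfRHS (g t)) (Icc t₀ (t₀ + 1/C)) t := by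
  have hC0 : (0:ℝ) < C := lt_of_lt_of_le one_pos hC1
  have hball : Metric.closedBall x₀ 1 ⊆ Metric.closedBall (0 : M) (K + 1) := by
    intro y hy
    rw [Metric.mem_closedBall] at *
    calc dist y 0 ≤ dist y x₀ + dist x₀ 0 := dist_triangle _ _ _
      _ ≤ 1 + K := by
          rw [dist_zero_right] at *
          linarith [hy]
      _ = K + 1 := by ring
  have hpl : IsPicardLindelof (fun _ : ℝ => (bfRHS : M → M)) (tmin := t₀) (tmax := t₀ + 1/C)
      ⟨t₀, le_rfl, le_add_of_nonneg_right (by positivity)⟩ x₀ 1 0 ⟨C, hC0.le⟩ L :=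
    { lipschitzOnWith := fun _ _ => hL.mono hball
      continuousOn := fun _ _ => continuousOn_const
      norm_le := fun _ _ x hx => hC x (hball hx)
      mul_max_le := by
        have h1 : C * max (t₀ + 1/C - t₀) (t₀ - t₀) = 1 := by
          rw [add_sub_cancel_left, sub_self, max_eq_left (by positivity)]
          rw [mul_one_div, div_self (ne_of_gt hC0)]
        refine le_of_eq ?_
        rw [NNReal.coe_one, NNReal.coe_zero, sub_zero]
        exact h1 }
  obtain ⟨g, hg0, hg⟩ := hpl.exists_eq_forall_mem_Icc_hasDerivWithinAt₀
  exact ⟨g, hg0, hg⟩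


lemma splice {v : M → M} {f g : ℝ → M} {a b c : ℝ} (hbc : b ≤ c)
    (hf : ∀ t ∈ Icc a b, HasDerivWithinAt f (v (f t)) (Icc a b) t)
    (hg : ∀ t ∈ Icc b c, HasDerivWithinAt g (v (g t)) (Icc b c) t)
    (hfg : f b = g b) :
    ∀ t ∈ Icc a c, HasDerivWithinAt (fun s => if s ≤ b then f s else g s)
      (v ((fun s => if s ≤ b then f s else g s) t)) (Icc a c) t := by
  intro t ht
  set h : ℝ → M := fun s => if s ≤ b then f s else g s with hh
  have hef : ∀ s ∈ Icc a b, h s = f s := fun s hs => if_pos hs.2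
  have heg : ∀ s ∈ Icc b c, h s = g s := by
    intro s hs
    by_cases hsb : s ≤ b
    · have hsb' : s = b := le_antisymm hsb hs.1
      subst hsb'
      simp only [hh]
      rw [if_pos le_rfl, hfg]
    · simp only [hh, if_neg hsb]
  have hsub : Icc a c ⊆ Icc a b ∪ Icc b c := by
    intro x hx
    by_cases hxb : x ≤ b
    · exact Or.inl ⟨hx.1, hxb⟩
    · exact Or.inr ⟨(not_le.mp hxb).le, hx.2⟩
  rcases lt_trichotomy t b with hlt | heq | hgt
  · have htm : t ∈ Icc a b := ⟨ht.1, hlt.le⟩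
    have H : HasDerivWithinAt h (v (h t)) (Icc a b) t := by
      rw [hef t htm]
      exact (hf t htm).congr hef (hef t htm)
    exact H.mono_of_mem_nhdsWithin (mem_nhdsWithin.mpr
      ⟨Iio b, isOpen_Iio, hlt, fun y hy => ⟨hy.2.1, hy.1.le⟩⟩)
  · subst heq
    have htm1 : t ∈ Icc a t := ⟨ht.1, le_rfl⟩
    have htm2 : t ∈ Icc t c := ⟨le_rfl, hbc⟩
    have H1 : HasDerivWithinAt h (v (h t)) (Icc a t) t := by
      rw [hef t htm1]
      exact (hf t htm1).congr hef (hef t htm1)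
    have H2 : HasDerivWithinAt h (v (h t)) (Icc t c) t := by
      rw [heg t htm2]
      exact (hg t htm2).congr heg (heg t htm2)
    exact (H1.union H2).mono hsub
  · have htm : t ∈ Icc b c := ⟨hgt.le, ht.2⟩
    have H : HasDerivWithinAt h (v (h t)) (Icc b c) t := by
      rw [heg t htm]
      exact (hg t htm).congr heg (heg t htm)
    exact H.mono_of_mem_nhdsWithin (mem_nhdsWithin.mpr
      ⟨Ioi b, isOpen_Ioi, hgt, fun y hy => ⟨hy.1.le, hy.2.2⟩⟩)


lemma invariance {T : ℝ} (hT : 0 ≤ T) {f : ℝ → M}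
    (hf : ∀ t ∈ Icc (0:ℝ) T, HasDerivWithinAt f (bfRHS (f t)) (Icc 0 T) t) :
    ∀ t ∈ Icc (0:ℝ) T, Matrix.trace (f t * (f t)ᵀ) ≤ Matrix.trace (f 0 * (f 0)ᵀ) := by
  have hanti := qAntitone (convex_Icc (0:ℝ) T) (A := f)
    (fun t ht i j => entry_deriv (hf t ht) i j)
  intro t ht
  exact hanti ⟨le_rfl, hT⟩ ht ht.1

theorem exists_solution_M (A₀ : M) :
    ∃ A : ℝ → M, A 0 = A₀ ∧ ∀ t ∈ Ici (0:ℝ),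
      HasDerivWithinAt A (bfRHS (A t)) (Ici 0) t := by
  classical
  set q₀ := Matrix.trace (A₀ * A₀ᵀ) with hq₀
  have hq0 : 0 ≤ q₀ := trace_mul_transpose_nonneg A₀
  set K : ℝ := m * Real.sqrt q₀ with hK
  have hK0 : 0 ≤ K := by positivity
  obtain ⟨L, hL⟩ := exists_lip (m := m) (K + 1)
  obtain ⟨C, hC1, hC⟩ := exists_bound (m := m) (K + 1)
  have hC0 : (0:ℝ) < C := lt_of_lt_of_le one_pos hC1
  set ε : ℝ := 1/C with hε
  have hε0 : 0 < ε := by positivity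
  have hnormK : ∀ X : M, Matrix.trace (X * Xᵀ) ≤ q₀ → ‖X‖ ≤ K := by
    intro X hX
    apply norm_le_of_entries X (Real.sqrt_nonneg q₀)
    intro i j
    have h1 : X i j * X i j ≤ Matrix.trace (X * Xᵀ) := by
      rw [trace_sum_sq]
      have ha : X i j * X i j ≤ ∑ j', X i j' * X i j' :=
        Finset.single_le_sum (f := fun j' => X i j' * X i j')
          (fun j' _ => mul_self_nonneg _) (Finset.mem_univ j)
      have hb : ∑ j', X i j' * X i j' ≤ ∑ i', ∑ j', X i' j' * X i' j' :=
        Finset.single_le_sum (f := fun i' => ∑ j', X i' j' * X i' j')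
          (fun i' _ => Finset.sum_nonneg fun _ _ => mul_self_nonneg _) (Finset.mem_univ i)
      exact le_trans ha hb
    calc |X i j| = Real.sqrt ((X i j)^2) := (Real.sqrt_sq_eq_abs _).symm
      _ ≤ Real.sqrt q₀ := Real.sqrt_le_sqrt (by rw [sq]; exact le_trans h1 hX)
  have sol : ∀ n : ℕ, ∃ f : ℝ → M, f 0 = A₀ ∧
      ∀ t ∈ Icc (0:ℝ) (((n:ℝ)+1)*ε), HasDerivWithinAt f (bfRHS (f t))
        (Icc 0 (((n:ℝ)+1)*ε)) t := by
    intro n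
    induction n with
    | zero =>
      obtain ⟨g, hg0, hg⟩ := pl_step hK0 hC1 hL hC A₀ (hnormK A₀ le_rfl) 0
      refine ⟨g, hg0, ?_⟩
      have he : (((0:ℕ):ℝ)+1)*ε = 0 + 1/C := by rw [hε]; push_cast; ring
      rw [he]
      exact hg
    | succ n ih =>
      obtain ⟨f, hf0, hf⟩ := ih
      have hb0 : (0:ℝ) ≤ ((n:ℝ)+1)*ε := mul_nonneg (by positivity) hε0.le
      have hmem : ((n:ℝ)+1)*ε ∈ Icc (0:ℝ) (((n:ℝ)+1)*ε) := ⟨hb0, le_rfl⟩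
      have hbnd : ‖f (((n:ℝ)+1)*ε)‖ ≤ K := by
        apply hnormK
        have := invariance hb0 hf (((n:ℝ)+1)*ε) hmem
        rwa [hf0] at this
      obtain ⟨g, hg0, hg⟩ := pl_step hK0 hC1 hL hC _ hbnd (((n:ℝ)+1)*ε)
      have hbc : ((n:ℝ)+1)*ε ≤ ((n:ℝ)+1)*ε + 1/C := by
        have : (0:ℝ) < 1/C := by positivity
        linarith
      have hspl := splice (v := (bfRHS : M → M)) hbc hf hg hg0.symm
      have hcast : ((n:ℝ)+1)*ε + 1/C = (((n+1:ℕ):ℝ)+1)*ε := by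
        rw [hε]; push_cast; ring
      rw [hcast] at hspl
      refine ⟨_, ?_, hspl⟩
      rw [if_pos hb0]
      exact hf0
  choose fam hfam0 hfam using sol
  have agree : ∀ k n : ℕ, ∀ s : ℝ, s ∈ Icc (0:ℝ) (((k:ℝ)+1)*ε) →
      s ∈ Icc (0:ℝ) (((n:ℝ)+1)*ε) → fam k s = fam n s := by
    intro k n s hs1 hs2
    set b := min (((k:ℝ)+1)*ε) (((n:ℝ)+1)*ε) with hb
    have hmono : ∀ (j : ℕ), b ≤ ((j:ℝ)+1)*ε → ∀ t ∈ Ico (0:ℝ) b,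
        HasDerivWithinAt (fam j) (bfRHS (fam j t)) (Ici t) t := by
      intro j hbj t htb
      refine (hfam j t ⟨htb.1, (lt_of_lt_of_le htb.2 hbj).le⟩).mono_of_mem_nhdsWithin ?_
      exact mem_nhdsWithin.mpr ⟨Iio (((j:ℝ)+1)*ε), isOpen_Iio, lt_of_lt_of_le htb.2 hbj,
        fun y hy => ⟨le_trans htb.1 hy.2, hy.1.le⟩⟩
    have hcont : ∀ (j : ℕ), b ≤ ((j:ℝ)+1)*ε → ContinuousOn (fam j) (Icc 0 b) := by
      intro j hbj t ht
      exact ((hfam j t ⟨ht.1, le_trans ht.2 hbj⟩).continuousWithinAt).mono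
        (Icc_subset_Icc le_rfl hbj)
    have hmem' : ∀ (j : ℕ), b ≤ ((j:ℝ)+1)*ε → ∀ t ∈ Ico (0:ℝ) b,
        fam j t ∈ Metric.closedBall (0:M) (K+1) := by
      intro j hbj t htb
      rw [Metric.mem_closedBall, dist_zero_right]
      have hTj : (0:ℝ) ≤ ((j:ℝ)+1)*ε := mul_nonneg (by positivity) hε0.le
      refine le_trans (hnormK _ ?_) (by linarith)
      have := invariance hTj (hfam j) t ⟨htb.1, (lt_of_lt_of_le htb.2 hbj).le⟩
      rwa [hfam0 j] at this
    have hEq := ODE_solution_unique_of_mem_Icc_right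
      (v := fun _ : ℝ => (bfRHS : M → M))
      (s := fun _ => Metric.closedBall (0:M) (K+1)) (K := L) (fun _ _ => hL)
      (hcont k (min_le_left _ _)) (hmono k (min_le_left _ _))
      (hmem' k (min_le_left _ _))
      (hcont n (min_le_right _ _)) (hmono n (min_le_right _ _))
      (hmem' n (min_le_right _ _))
      ((hfam0 k).trans (hfam0 n).symm)
    exact hEq ⟨hs1.1, le_min hs1.2 hs2.2⟩
  have hflt : ∀ s : ℝ, s < ((⌊s/ε⌋₊ : ℝ)+1)*ε := by
    intro s
    have := Nat.lt_floor_add_one (s/ε)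
    calc s = (s/ε)*ε := by field_simp
      _ < ((⌊s/ε⌋₊ : ℝ)+1)*ε := by
          apply mul_lt_mul_of_pos_right _ hε0
          exact_mod_cast this
  refine ⟨fun t => fam (⌊t/ε⌋₊) t, ?_, ?_⟩
  · have h00 : ⌊(0:ℝ)/ε⌋₊ = 0 := by norm_num
    show fam ⌊(0:ℝ)/ε⌋₊ 0 = A₀
    rw [h00]
    exact hfam0 0
  · intro t ht
    set N := ⌊t/ε⌋₊ + 1 with hN
    have htlt : t < ((N:ℝ)+1)*ε := by
      refine lt_of_lt_of_le (hflt t) ?_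
      apply mul_le_mul_of_nonneg_right _ hε0.le
      push_cast [hN]
      linarith
    have htmem : t ∈ Icc (0:ℝ) (((N:ℝ)+1)*ε) := ⟨ht, htlt.le⟩
    have hFeq : ∀ s ∈ Icc (0:ℝ) (((N:ℝ)+1)*ε), fam (⌊s/ε⌋₊) s = fam N s := by
      intro s hs
      exact agree _ _ s ⟨hs.1, (hflt s).le⟩ hs
    have H : HasDerivWithinAt (fun s => fam (⌊s/ε⌋₊) s) (bfRHS (fam N t))
        (Icc 0 (((N:ℝ)+1)*ε)) t :=
      (hfam N t htmem).congr hFeq (hFeq t htmem)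
    rw [← hFeq t htmem] at H
    exact H.mono_of_mem_nhdsWithin (mem_nhdsWithin.mpr
      ⟨Iio (((N:ℝ)+1)*ε), isOpen_Iio, htlt, fun y hy => ⟨hy.2, hy.1.le⟩⟩)

theorem exists_solution_entrywise (A₀ : M) :
    ∃ A : ℝ → M, A 0 = A₀ ∧ ∀ (i j : Fin m), ∀ t ∈ Ici (0:ℝ),
      HasDerivWithinAt (fun s => A s i j) (bfRHS (A t) i j) (Ici 0) t := by
  obtain ⟨A, h0, h⟩ := exists_solution_M A₀
  exact ⟨A, h0, fun i j t ht => entry_deriv (h t ht) i j⟩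

end Construction

/-- Along any solution of the bracket flow ODE the quantity `|A|²` has derivative
`−((tr A)² + tr S(A)²)|A|² − |[A,Aᵗ]|² ≤ 0`, vanishing exactly when `Aᵗ = −A`; hence
`|A(t)|` is nonincreasing.  Moreover for any initial matrix there is a solution
defined on all of `[0,∞)`. -/
theorem stmt18 (m : ℕ) (A₀ : Matrix (Fin m) (Fin m) ℝ) :
    (∃ A : ℝ → Matrix (Fin m) (Fin m) ℝ, A 0 = A₀ ∧
      ∀ (i j : Fin m), ∀ t ∈ Ici (0 : ℝ),
        HasDerivWithinAt (fun s => A s i j) (bfRHS (A t) i j) (Ici 0) t) ∧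
    (∀ A : ℝ → Matrix (Fin m) (Fin m) ℝ,
      (∀ (i j : Fin m), ∀ t ∈ Ici (0 : ℝ),
        HasDerivWithinAt (fun s => A s i j) (bfRHS (A t) i j) (Ici 0) t) →
      (∀ t ∈ Ici (0 : ℝ),
        HasDerivWithinAt (fun s => Matrix.trace (A s * (A s)ᵀ)) (bfNormDeriv (A t))
          (Ici 0) t ∧
        bfNormDeriv (A t) ≤ 0 ∧
        (bfNormDeriv (A t) = 0 ↔ (A t)ᵀ = -(A t))) ∧
      AntitoneOn (fun t => Matrix.trace (A t * (A t)ᵀ)) (Ici 0)) := by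
  
  constructor
  · exact exists_solution_entrywise A₀
  · intro A hA
    constructor
    · intro t ht
      exact ⟨qHasDeriv (fun i j => hA i j t ht), bfNormDeriv_nonpos _,
        bfNormDeriv_eq_zero_iff _⟩
    · exact qAntitone (convex_Ici 0) (fun t ht i j => hA i j t ht)
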